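/- If V is an f-static potential, i.e. F_g*(V) = 0 and F_f*(V) = 0 on M with V not identically zero, then S_f ≡ 0 on M, assuming that V cannot vanish on any nonempty open set. -/
import Mathlib


/-- If V is an f-static potential, i.e. F_g*(V) = 0 and
F_f*(V) = 0 on M with V not identically zero, and V does not vanish on any
nonempty open set, then S_f ≡ 0 on M.
Formulated with tensor fields valued in an abstract space `T` with trace
map `tr`, the pointwise trace identities as hypotheses, and S_f continuous. -/
theorem stmt_5 (M : Type*) [TopologicalSpace M] (n : ℕ) (hn : 2 ≤ n)
    (T : Type*) [AddCommGroup T] [Module ℝ T] (tr : T →ₗ[ℝ] ℝ)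
    (g Ric Hessf dfdf HessV FgV : M → T)
    (V R Δf Gff ΔV GVf Sf FfV : M → ℝ)
    (htrg : ∀ x, tr (g x) = n) (htrHV : ∀ x, tr (HessV x) = ΔV x)
    (htrRic : ∀ x, tr (Ric x) = R x) (htrHf : ∀ x, tr (Hessf x) = Δf x)
    (htrdf : ∀ x, tr (dfdf x) = Gff x)
    (hSf : ∀ x, Sf x = R x + 2 * Δf x - (((n : ℝ) - 2) / ((n : ℝ) - 1)) * Gff x)
    (hFgdef : ∀ x, FgV x = HessV x - ΔV x • g x + GVf x • g x
      - V x • (Ric x + Hessf x + ((1 : ℝ) / ((n : ℝ) - 1)) • dfdf x)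
      + ((1 / 2) * V x * Sf x) • g x)
    (hFfdef : ∀ x, FfV x = 2 * ΔV x - (2 * (n : ℝ) / ((n : ℝ) - 1)) * GVf x
      - (2 / ((n : ℝ) - 1)) * V x * Δf x + (2 / ((n : ℝ) - 1)) * V x * Gff x
      - V x * Sf x)
    (hSfcont : Continuous Sf)
    (hVne : ∃ x, V x ≠ 0)
    (hVopen : ∀ U : Set M, IsOpen U → U.Nonempty → ∃ x ∈ U, V x ≠ 0)
    (hFg0 : ∀ x, FgV x = 0) (hFf0 : ∀ x, FfV x = 0) :
    ∀ x, Sf x = 0 := by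

  have hn1 : ((n : ℝ) - 1) ≠ 0 := by
    have : (2:ℝ) ≤ n := by exact_mod_cast hn
    linarith
  have key : ∀ x, V x * Sf x = 0 := by
    intro x
    have E1 : tr (FgV x) = 0 := by rw [hFg0 x]; simp
    rw [hFgdef x] at E1
    simp only [map_add, map_sub, map_smul, smul_eq_mul, htrg, htrHV, htrRic,
      htrHf, htrdf] at E1
    have E2 := hFf0 x
    rw [hFfdef x] at E2
    have hS := hSf x
    field_simp at E1 E2 hS
    have h0 : ((n:ℝ)-1) * (V x * Sf x) = 0 := by
      linear_combination (-1:ℝ) * E1 - ((n:ℝ)-1) * E2 + 2 * V x * hS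
    exact (mul_eq_zero.1 h0).resolve_left hn1
  intro x
  by_contra h
  have hopen : IsOpen {y | Sf y ≠ 0} := isOpen_ne.preimage hSfcont
  obtain ⟨y, hy, hVy⟩ := hVopen _ hopen ⟨x, h⟩
  exact hy (by have := key y; rcases mul_eq_zero.1 this with h'|h' <;> [exact absurd h' hVy; exact h'])
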